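/- arXiv:1908.05888 — 2 statements merged into one kernel-verified Lean document; each statement's English description precedes it below -/
import Mathlib

section
/- Let (T, τ) be a Λ-linear (Q,I)-contraction datum. Then for every representation M of Q over Λ and all elements q₁, q₂ of Q, the Λ-linear endomorphisms of T(M|_I) satisfy (τ(q₁)_{M|_I} ∘ T(λ_{q₁,M})) ∘ (τ(q₂)_{M|_I} ∘ T(λ_{q₂,M})) = τ(q₁q₂)_{M|_I} ∘ T(λ_{q₁q₂,M}). -/
open CategoryTheory

noncomputable section ContractionSetup

variable (Λ : Type) [CommRing Λ] {Q : Type} [Group Q]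

/-- Conjugation by `q : Q` as a monoid homomorphism `I →* I`, for `I` a normal subgroup of `Q`. -/
def conjSubgroupHom (I : Subgroup Q) [I.Normal] (q : Q) : ↥I →* ↥I where
  toFun t := ⟨q * ↑t * q⁻¹, Subgroup.Normal.conj_mem ‹I.Normal› ↑t t.2 q⟩
  map_one' := by ext; simp
  map_mul' t₁ t₂ := by ext; push_cast; group

variable (I : Subgroup Q) [I.Normal]

/-- The representation `q*M`: same underlying `Λ`-module as `M`, with `t : I` acting as
`q * t * q⁻¹` acts on `M`. -/
def conjRep (q : Q) (M : Rep.{0} Λ ↥I) : Rep.{0} Λ ↥I :=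
  Rep.of (M.ρ.comp (conjSubgroupHom I q))

/-- The `Λ`-linear functor `q* : Rep Λ I ⥤ Rep Λ I`. -/
def conjFunctor (q : Q) : Rep.{0} Λ ↥I ⥤ Rep.{0} Λ ↥I where
  obj M := conjRep Λ I q M
  map f := Rep.ofHom
    { toLinearMap := f.hom.toLinearMap
      isIntertwining' := fun t => f.hom.isIntertwining' (conjSubgroupHom I q t) }

/-- The canonical identification `q₂*(q₁*M) ⟶ (q₁q₂)*M` (the identity map on underlying
modules), realizing the equality of functors `(q₁q₂)* = q₂* ∘ q₁*`. -/
def conjRepMulHom (q₁ q₂ : Q) (M : Rep.{0} Λ ↥I) :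
    conjRep Λ I q₂ (conjRep Λ I q₁ M) ⟶ conjRep Λ I (q₁ * q₂) M := Rep.ofHom {
  toLinearMap := LinearMap.id
  isIntertwining' t := by
    have h : conjSubgroupHom I q₁ (conjSubgroupHom I q₂ t) = conjSubgroupHom I (q₁ * q₂) t := by
      ext
      simp only [conjSubgroupHom, MonoidHom.coe_mk, OneHom.coe_mk]
      group
    ext x
    show M.ρ (conjSubgroupHom I q₁ (conjSubgroupHom I q₂ t)) x =
      M.ρ (conjSubgroupHom I (q₁ * q₂) t) x
    rw [h] }

/-- The restriction `M|_I` to `I` of a representation `M` of `Q`. -/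
def resRep (M : Rep.{0} Λ Q) : Rep.{0} Λ ↥I :=
  Rep.of (M.ρ.comp I.subtype)

/-- For `M` a representation of `Q` and `q : Q`, the `I`-equivariant `Λ`-linear map
`λ_{q,M} : M|_I ⟶ q*(M|_I)` given by `m ↦ q • m`. -/
def lambdaRes (M : Rep.{0} Λ Q) (q : Q) :
    resRep Λ I M ⟶ conjRep Λ I q (resRep Λ I M) := Rep.ofHom {
  toLinearMap := M.ρ q
  isIntertwining' t := by
    ext x
    show M.ρ q (M.ρ (I.subtype t) x) = M.ρ (I.subtype (conjSubgroupHom I q t)) (M.ρ q x)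
    have h : I.subtype (conjSubgroupHom I q t) * q = q * I.subtype t := by
      simp [conjSubgroupHom]
    rw [← Module.End.mul_apply, ← Module.End.mul_apply, ← map_mul, ← map_mul, h] }

/-- For `t ∈ I` and `M : Rep Λ I`, the component at `M` of the natural transformation
`λ_t : id ⟶ t*`, given by the action of `t` on `M`. -/
def lambdaI (t : ↥I) (M : Rep.{0} Λ ↥I) : M ⟶ conjRep Λ I (↑t : Q) M := Rep.ofHom {
  toLinearMap := M.ρ t
  isIntertwining' u := by
    ext x
    show M.ρ t (M.ρ u x) = M.ρ (conjSubgroupHom I (↑t : Q) u) (M.ρ t x)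
    have h : conjSubgroupHom I (↑t : Q) u * t = t * (show ↥I from u) := by
      ext
      simp only [conjSubgroupHom, MonoidHom.coe_mk, OneHom.coe_mk, Subgroup.coe_mul]
      group
    rw [← Module.End.mul_apply, ← Module.End.mul_apply, ← map_mul, ← map_mul, h] }

end ContractionSetup

/-- Let `(T, τ)` be a `Λ`-linear `(Q,I)`-contraction datum. Then for every
representation `M` of `Q` over `Λ` and all `q₁ q₂ : Q`, the `Λ`-linear endomorphisms of
`T(M|_I)` satisfy
`(τ(q₁)_{M|_I} ∘ T(λ_{q₁,M})) ∘ (τ(q₂)_{M|_I} ∘ T(λ_{q₂,M})) = τ(q₁q₂)_{M|_I} ∘ T(λ_{q₁q₂,M})`. -/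
theorem contraction_endo_mul (Λ : Type) [CommRing Λ] {Q : Type} [Group Q]
    (I : Subgroup Q) [I.Normal]
    (T : Rep.{0} Λ ↥I ⥤ ModuleCat Λ) [T.Additive] [T.Linear Λ]
    (τ : ∀ q : Q, conjFunctor Λ I q ⋙ T ⟶ T)
    -- condition (a): `τ(q₁q₂)_M = τ(q₁)_M ∘ τ(q₂)_{q₁*M}` under the canonical identification
    -- `(q₁q₂)*M = q₂*(q₁*M)`
    (tau_mul : ∀ (q₁ q₂ : Q) (M : Rep.{0} Λ ↥I),
      T.map (conjRepMulHom Λ I q₁ q₂ M) ≫ (τ (q₁ * q₂)).app M =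
        (τ q₂).app (conjRep Λ I q₁ M) ≫ (τ q₁).app M)
    -- condition (b): `τ(t) ∘ T(λ_t) = id` for every `t ∈ I`
    (tau_lambda : ∀ (t : ↥I) (M : Rep.{0} Λ ↥I),
      T.map (lambdaI Λ I t M) ≫ (τ (↑t : Q)).app M = 𝟙 (T.obj M))
    (M : Rep.{0} Λ Q) (q₁ q₂ : Q) :
    (T.map (lambdaRes Λ I M q₂) ≫ (τ q₂).app (resRep Λ I M)) ≫
      (T.map (lambdaRes Λ I M q₁) ≫ (τ q₁).app (resRep Λ I M)) =
      T.map (lambdaRes Λ I M (q₁ * q₂)) ≫ (τ (q₁ * q₂)).app (resRep Λ I M) := by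

  have key : lambdaRes Λ I M (q₁ * q₂) =
      lambdaRes Λ I M q₂ ≫ (conjFunctor Λ I q₂).map (lambdaRes Λ I M q₁) ≫
        conjRepMulHom Λ I q₁ q₂ (resRep Λ I M) := by
    apply Rep.hom_ext
    ext x
    show M.ρ (q₁ * q₂) x = M.ρ q₁ (M.ρ q₂ x)
    rw [map_mul]
    rfl
  have nat := (τ q₂).naturality (lambdaRes Λ I M q₁)
  calc (T.map (lambdaRes Λ I M q₂) ≫ (τ q₂).app (resRep Λ I M)) ≫
      (T.map (lambdaRes Λ I M q₁) ≫ (τ q₁).app (resRep Λ I M))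
      = T.map (lambdaRes Λ I M q₂) ≫
        (T.map ((conjFunctor Λ I q₂).map (lambdaRes Λ I M q₁)) ≫
          (τ q₂).app (conjRep Λ I q₁ (resRep Λ I M))) ≫ (τ q₁).app (resRep Λ I M) := by
        exact (Category.assoc _ _ _).trans (congrArg (_ ≫ ·) ((Category.assoc _ _ _).symm.trans (congrArg (· ≫ _) nat.symm)))
    _ = T.map (lambdaRes Λ I M q₂) ≫
        T.map ((conjFunctor Λ I q₂).map (lambdaRes Λ I M q₁)) ≫
        T.map (conjRepMulHom Λ I q₁ q₂ (resRep Λ I M)) ≫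
        (τ (q₁ * q₂)).app (resRep Λ I M) := by
        exact congrArg (_ ≫ ·) ((Category.assoc _ _ _).trans (congrArg (_ ≫ ·) (tau_mul q₁ q₂ _).symm))
    _ = T.map (lambdaRes Λ I M (q₁ * q₂)) ≫ (τ (q₁ * q₂)).app (resRep Λ I M) := by
        rw [key]; refine Eq.symm ?_
        exact (congrArg (· ≫ _) ((T.map_comp _ _).trans (congrArg (_ ≫ ·) (T.map_comp _ _)))).trans ((Category.assoc _ _ _).trans (congrArg (_ ≫ ·) (Category.assoc _ _ _)))
end

section
/- Let T : Rep Λ I ⥤ Mod Λ be a Λ-linear exact functor that preserves small filtered colimits. If M is an object of Rep Λ I whose underlying Λ-module is flat, then T(M) is a flat Λ-module. -/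
open CategoryTheory TensorProduct LinearMap
namespace EFF
variable {Λ : Type} [CommRing Λ] {I : Type} [Group I] (M : Rep.{0} Λ I)

noncomputable def F : ModuleCat.{0} Λ ⥤ Rep.{0} Λ I where
  obj N := Rep.of ((Representation.trivial Λ (G := I) (V := N)).tprod M.ρ)
  map {N N'} f := Rep.ofHom
    { toLinearMap := LinearMap.rTensor _ f.hom
      isIntertwining' := fun g => TensorProduct.ext' fun n m => by
        simp [Representation.tprod_apply] }
  map_id N := by ext1; exact Representation.IntertwiningMap.ext (LinearMap.rTensor_id _ _)
  map_comp f g := by ext1; exact Representation.IntertwiningMap.ext (LinearMap.rTensor_comp _ _ _)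

@[simp] lemma F_map_hom {N N' : ModuleCat Λ} (f : N ⟶ N') :
    ((F M).map f).hom.toLinearMap = LinearMap.rTensor _ f.hom := rfl

lemma F_map_add {N N' : ModuleCat Λ} (f g : N ⟶ N') :
    (F M).map (f + g) = (F M).map f + (F M).map g := by
  ext1
  apply Representation.IntertwiningMap.ext
  show rTensor _ (f + g).hom = rTensor _ f.hom + rTensor _ g.hom
  exact TensorProduct.ext' fun n m => add_tmul (f n) (g n) m

lemma F_map_smul {N N' : ModuleCat Λ} (r : Λ) (f : N ⟶ N') :
    (F M).map (r • f) = r • (F M).map f := by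
  ext1
  apply Representation.IntertwiningMap.ext
  show rTensor _ (r • f).hom = r • rTensor _ f.hom
  exact TensorProduct.ext' fun n m => (smul_tmul' r (f n) m).symm

/-- The morphism `M ⟶ N ⊗ M`, `m ↦ n ⊗ m`. -/
noncomputable def j (N : ModuleCat Λ) (n : N) : M ⟶ (F M).obj N :=
  Rep.ofHom (ρ := M.ρ)
  { toLinearMap := TensorProduct.mk Λ N M.V n
    isIntertwining' := fun g => by
      refine LinearMap.ext fun m => ?_
      simp [Representation.tprod_apply] }

@[simp] lemma j_hom_apply (N : ModuleCat Λ) (n : N) (m : M.V) :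
    (j M N n).hom m = n ⊗ₜ[Λ] m := rfl

lemma j_add (N : ModuleCat Λ) (n n' : N) : j M N (n + n') = j M N n + j M N n' := by
  ext1
  rw [Rep.add_hom]
  exact Representation.IntertwiningMap.ext (LinearMap.ext fun m => add_tmul n n' m)

lemma j_smul (N : ModuleCat Λ) (r : Λ) (n : N) : j M N (r • n) = r • j M N n := by
  ext1
  rw [Rep.smul_hom]
  exact Representation.IntertwiningMap.ext (LinearMap.ext fun m => (smul_tmul' r n m).symm)

lemma j_naturality {N N' : ModuleCat Λ} (f : N ⟶ N') (n : N) :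
    j M N n ≫ (F M).map f = j M N' (f n) := by
  ext1
  exact Representation.IntertwiningMap.ext (LinearMap.ext fun m => rfl)

/-- The unit identification `Λ ⊗ M ⟶ M`. -/
noncomputable def v : (F M).obj (ModuleCat.of Λ Λ) ⟶ M :=
  Rep.ofHom (σ := M.ρ)
  { toLinearMap := (TensorProduct.lid Λ M.V).toLinearMap
    isIntertwining' := fun g => TensorProduct.ext' fun r m => by
      simp [Representation.tprod_apply] }

lemma j_comp_v (r : Λ) : j M (ModuleCat.of Λ Λ) r ≫ v M = r • 𝟙 M := by
  ext1
  refine Representation.IntertwiningMap.ext (LinearMap.ext fun m => ?_)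
  show (TensorProduct.lid Λ _) (r ⊗ₜ m) = r • m
  simp

section Exactness

open Limits

variable (T : Rep.{0} Λ I ⥤ ModuleCat Λ) [T.Additive]

lemma T_mono (hexact : ∀ S : ShortComplex (Rep Λ I), S.ShortExact → (S.map T).ShortExact)
    {A B : Rep Λ I} (φ : A ⟶ B) [Mono φ] : Mono (T.map φ) := by
  have h : (ShortComplex.mk φ (cokernel.π φ) (cokernel.condition φ)).ShortExact :=
    { exact := ShortComplex.exact_of_g_is_cokernel _ (cokernelIsCokernel φ) }
  exact (hexact _ h).mono_f

lemma T_epi (hexact : ∀ S : ShortComplex (Rep Λ I), S.ShortExact → (S.map T).ShortExact)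
    {A B : Rep Λ I} (φ : A ⟶ B) [Epi φ] : Epi (T.map φ) := by
  have h : (ShortComplex.mk (kernel.ι φ) φ (kernel.condition φ)).ShortExact :=
    { exact := ShortComplex.exact_of_f_is_kernel _ (kernelIsKernel φ) }
  exact (hexact _ h).epi_g

/-- A short complex in `Rep` whose underlying complex of modules is short exact is short exact. -/
lemma rep_shortExact (S : ShortComplex (Rep.{0} Λ I))
    (h1 : Function.Injective S.f.hom) (h3 : Function.Surjective S.g.hom)
    (h2 : LinearMap.range S.f.hom.toLinearMap = LinearMap.ker S.g.hom.toLinearMap) :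
    S.ShortExact := by
  have forgetS : (S.map (forget₂ (Rep.{0} Λ I) (ModuleCat Λ))).Exact := by
    rw [ShortComplex.moduleCat_exact_iff_range_eq_ker]
    exact h2
  have : Mono S.f := by
    exact (Rep.mono_iff_injective _).mpr h1
  have : Epi S.g := by
    exact (Rep.epi_iff_surjective _).mpr h3
  exact { exact := (S.exact_map_iff_of_faithful (forget₂ (Rep.{0} Λ I) (ModuleCat Λ))).mp forgetS }

end Exactness

section Colimit

open Limits

variable (W : ModuleCat.{0} Λ)

/-- The directed poset of finitely generated submodules of `W`. -/
abbrev Ω := {P : Submodule Λ (↑W) // P.FG}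

instance : Nonempty (Ω W) := ⟨⟨⊥, Submodule.fg_bot⟩⟩

instance : IsDirected (Ω W) (· ≤ ·) :=
  ⟨fun P Q => ⟨⟨P.1 ⊔ Q.1, P.2.sup Q.2⟩, Subtype.coe_le_coe.mp le_sup_left,
    Subtype.coe_le_coe.mp le_sup_right⟩⟩

noncomputable instance : DecidableEq (Ω W) := Classical.decEq _

/-- The inclusion maps of the directed system of f.g. submodules. -/
def sysf (P Q : Ω W) (h : P ≤ Q) : (↥P.1) →ₗ[Λ] (↥Q.1) :=
  Submodule.inclusion (Subtype.coe_le_coe.mpr h)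

instance : DirectedSystem (fun P : Ω W => ↥P.1) (fun ⦃P Q⦄ h => sysf W P Q h) where
  map_self := by intros; rfl
  map_map := by intros; rfl

/-- The diagram of f.g. submodules in `ModuleCat`. -/
noncomputable def Dm : Ω W ⥤ ModuleCat Λ where
  obj P := ModuleCat.of Λ ↥P.1
  map {P Q} h := ModuleCat.ofHom (sysf W P Q (leOfHom h))
  map_id P := by ext; rfl
  map_comp f g := by ext; rfl

/-- The comparison with the direct limit. -/
noncomputable def toW : Module.DirectLimit (fun P : Ω W => ↥P.1) (sysf W) →ₗ[Λ] ↑W :=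
  Module.DirectLimit.lift Λ _ _ _ (fun P => P.1.subtype) (fun P Q h x => rfl)

lemma toW_of (P : Ω W) (x : ↥P.1) :
    toW W (Module.DirectLimit.of Λ (Ω W) (fun P : Ω W => ↥P.1) (sysf W) P x) = x :=
  Module.DirectLimit.lift_of _ _ _

lemma toW_bijective : Function.Bijective (toW W) := by
  constructor
  · intro z z' h
    obtain ⟨P, x, rfl⟩ := Module.DirectLimit.exists_of (f := sysf W) z
    obtain ⟨Q, y, rfl⟩ := Module.DirectLimit.exists_of (f := sysf W) z'
    rw [toW_of, toW_of] at h
    have hPR : P ≤ (⟨P.1 ⊔ Q.1, P.2.sup Q.2⟩ : Ω W) := Subtype.coe_le_coe.mp le_sup_left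
    have hQR : Q ≤ (⟨P.1 ⊔ Q.1, P.2.sup Q.2⟩ : Ω W) := Subtype.coe_le_coe.mp le_sup_right
    rw [← Module.DirectLimit.of_f (G := fun P : Ω W => ↥P.1) (f := sysf W) (hij := hPR) (x := x),
      ← Module.DirectLimit.of_f (G := fun P : Ω W => ↥P.1) (f := sysf W) (hij := hQR) (x := y)]
    congr 1
    exact Subtype.ext h
  · intro w
    exact ⟨Module.DirectLimit.of Λ (Ω W) (fun P : Ω W => ↥P.1) (sysf W)
      ⟨Submodule.span Λ {w}, Submodule.fg_span_singleton w⟩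
      ⟨w, Submodule.mem_span_singleton_self w⟩, toW_of _ _ _⟩


noncomputable def equiv1 : Module.DirectLimit (fun P : Ω W => ↥P.1) (sysf W) ≃ₗ[Λ] ↑W :=
  LinearEquiv.ofBijective (toW W) (toW_bijective W)

lemma equiv1_symm_apply (P : Ω W) (x : ↥P.1) :
    (equiv1 W).symm (P.1.subtype x)
      = Module.DirectLimit.of Λ (Ω W) (fun P : Ω W => ↥P.1) (sysf W) P x := by
  rw [LinearEquiv.symm_apply_eq]
  exact (toW_of W P x).symm

instance : DirectedSystem (fun P : Ω W => (↥P.1 ⊗[Λ] M.V))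
    (fun ⦃P Q⦄ h => LinearMap.rTensor (M.V) (sysf W P Q h)) where
  map_self := by
    intro P x
    have h : sysf W P P le_rfl = LinearMap.id := LinearMap.ext fun _ => rfl
    rw [h, LinearMap.rTensor_id]
    rfl
  map_map := by
    intro k j i hij hjk x
    have h : (sysf W j k hjk).comp (sysf W i j hij) = sysf W i k (hij.trans hjk) :=
      LinearMap.ext fun _ => rfl
    rw [← h, LinearMap.rTensor_comp]
    rfl

noncomputable def psi : (↑W ⊗[Λ] M.V) ≃ₗ[Λ]
    Module.DirectLimit (fun P : Ω W => (↥P.1 ⊗[Λ] M.V))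
      (fun P Q h => LinearMap.rTensor (M.V) (sysf W P Q h)) :=
  (TensorProduct.congr (equiv1 W).symm (LinearEquiv.refl Λ (M.V))).trans
    (TensorProduct.directLimitLeft (sysf W) (M.V))

lemma psi_apply (P : Ω W) (x : ↥P.1) (m : M.V) :
    psi M W (P.1.subtype x ⊗ₜ[Λ] m)
      = Module.DirectLimit.of Λ (Ω W) (fun P : Ω W => (↥P.1 ⊗[Λ] M.V))
          (fun P Q h => LinearMap.rTensor (M.V) (sysf W P Q h)) P (x ⊗ₜ[Λ] m) := by
  show (TensorProduct.directLimitLeft (sysf W) (M.V))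
      ((TensorProduct.congr (equiv1 W).symm (LinearEquiv.refl Λ (M.V)))
        (P.1.subtype x ⊗ₜ[Λ] m)) = _
  rw [TensorProduct.congr_tmul, LinearEquiv.refl_apply, equiv1_symm_apply]
  exact TensorProduct.directLimitLeft_tmul_of (f := sysf W) (M := M.V)
    (g := x) (m := m)

/-- The cocone over the diagram of f.g. submodules tensored with `M`, with apex `W ⊗ M`. -/
noncomputable def cc : Limits.Cocone (Dm W ⋙ F M) where
  pt := (F M).obj W
  ι :=
    { app := fun P => (F M).map (ModuleCat.ofHom P.1.subtype)
      naturality := fun P Q h => by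
        have hh : (Dm W).map h ≫ ModuleCat.ofHom Q.1.subtype = ModuleCat.ofHom P.1.subtype :=
          by ext; rfl
        rw [Functor.comp_map]
        exact ((F M).map_comp ((Dm W).map h) (ModuleCat.ofHom Q.1.subtype)).symm.trans
          ((congrArg (F M).map hh).trans (Category.comp_id _).symm) }

noncomputable def descL (s : Limits.Cocone ((Dm W ⋙ F M) ⋙ forget₂ (Rep.{0} Λ I) (ModuleCat Λ))) :
    (↑W ⊗[Λ] M.V) →ₗ[Λ] ↑s.pt :=
  (Module.DirectLimit.lift Λ (Ω W) (fun P : Ω W => (↥P.1 ⊗[Λ] M.V))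
    (fun P Q h => LinearMap.rTensor (M.V) (sysf W P Q h))
    (fun P => (s.ι.app P).hom)
    (fun P Q hPQ x => by
      exact ConcreteCategory.congr_hom (s.ι.naturality (homOfLE hPQ)) x)).comp
    (psi M W).toLinearMap

lemma descL_apply (s : Limits.Cocone ((Dm W ⋙ F M) ⋙ forget₂ (Rep.{0} Λ I) (ModuleCat Λ)))
    (P : Ω W) (x : ↥P.1) (m : M.V) :
    descL M W s (P.1.subtype x ⊗ₜ[Λ] m) = s.ι.app P (x ⊗ₜ[Λ] m) := by
  rw [descL, LinearMap.comp_apply, LinearEquiv.coe_coe, psi_apply]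
  exact Module.DirectLimit.lift_of _ _ _

noncomputable def ccForgetIsColimit :
    Limits.IsColimit ((forget₂ (Rep.{0} Λ I) (ModuleCat Λ)).mapCocone (cc M W)) where
  desc s := ModuleCat.ofHom (descL M W s)
  fac s P := ModuleCat.hom_ext (TensorProduct.ext' fun x m => descL_apply M W s P x m)
  uniq s f hf := by
    refine ModuleCat.hom_ext (TensorProduct.ext' fun w mm => ?_)
    have hw : w ∈ Submodule.span Λ ({w} : Set ↑W) := Submodule.mem_span_singleton_self w
    let P : Ω W := ⟨Submodule.span Λ {w}, Submodule.fg_span_singleton w⟩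
    show f (P.1.subtype ⟨w, hw⟩ ⊗ₜ[Λ] mm) = descL M W s (P.1.subtype ⟨w, hw⟩ ⊗ₜ[Λ] mm)
    rw [descL_apply M W s P ⟨w, hw⟩ mm, ← hf P]
    rfl

noncomputable def ccIsColimit : Limits.IsColimit (cc M W) :=
  Limits.isColimitOfReflects (forget₂ (Rep.{0} Λ I) (ModuleCat Λ)) (ccForgetIsColimit M W)

instance : IsFiltered (Ω W) := inferInstance

end Colimit


instance : (F M).Additive := ⟨by intros; apply F_map_add⟩

lemma F_map_mono (hMf : Module.Flat Λ (M.V)) {N N' : ModuleCat Λ} (φ : N ⟶ N')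
    (h : Function.Injective φ) : Mono ((F M).map φ) := by
  rw [Rep.mono_iff_injective]
  exact Module.Flat.rTensor_preserves_injective_linearMap φ.hom h

lemma F_map_epi {N N' : ModuleCat Λ} (φ : N ⟶ N')
    (h : Function.Surjective φ) : Epi ((F M).map φ) := by
  rw [Rep.epi_iff_surjective]
  exact LinearMap.rTensor_surjective _ (g := φ.hom) h

universe u in
instance forget_preservesFilteredColimits0 :
    Limits.PreservesFilteredColimitsOfSize.{0, 0} (forget (ModuleCat.{u} Λ)) := by
  have h1 : Limits.PreservesFilteredColimitsOfSize.{0, 0} (forget AddCommGrpCat.{u}) :=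
    Limits.preservesFilteredColimitsOfSize_shrink.{0, u, 0, u, u, u, u + 1, u + 1} _
  have h2 : Limits.PreservesColimitsOfSize.{0, 0} (forget₂ (ModuleCat.{u} Λ) AddCommGrpCat.{u}) :=
    inferInstance
  have h3 : Limits.PreservesFilteredColimitsOfSize.{0, 0}
      (forget₂ (ModuleCat.{u} Λ) AddCommGrpCat.{u} ⋙ forget AddCommGrpCat.{u}) :=
    Limits.comp_preservesFilteredColimits _ _
  rwa [HasForget₂.forget_comp] at h3

end EFF

open CategoryTheory EFF TensorProduct

/-- Let `T : Rep Λ I ⥤ Mod Λ` be a `Λ`-linear exact functor (additive and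
preserving short exact sequences) that preserves small filtered colimits. If `M : Rep Λ I`
has flat underlying `Λ`-module, then `T(M)` is a flat `Λ`-module. -/
theorem exact_functor_flat (Λ : Type) [CommRing Λ] (I : Type) [Group I]
    (T : Rep.{0} Λ I ⥤ ModuleCat Λ) [T.Additive] [T.Linear Λ]
    (hexact : ∀ S : ShortComplex (Rep Λ I), S.ShortExact → (S.map T).ShortExact)
    [Limits.PreservesFilteredColimits T]
    (M : Rep.{0} Λ I) (hM : Module.Flat Λ M.V) :
    Module.Flat Λ ↥(T.obj M) := by
  classical
  haveI hMflat : Module.Flat Λ (M.V) := hM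
  apply Module.Flat.of_forall_isTrivialRelation
  intro l f x hfx
  set Nι : ModuleCat Λ := ModuleCat.of Λ (Fin l → Λ) with hNι
  set gl : (Fin l → Λ) →ₗ[Λ] Λ := ∑ i, f i • LinearMap.proj i with hgl
  have gl_apply : ∀ w : Fin l → Λ, gl w = ∑ i, f i * w i := by
    intro w
    simp [hgl, LinearMap.sum_apply, smul_eq_mul]
  set K : Submodule Λ (Fin l → Λ) := LinearMap.ker gl with hK
  set WK : ModuleCat Λ := ModuleCat.of Λ ↥K with hWK
  -- the short exact sequence `0 → K ⊗ M → Λ^Fin l ⊗ M → (range gl) ⊗ M → 0` in `Rep Λ I`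
  set Sf : (F M).obj WK ⟶ (F M).obj Nι := (F M).map (ModuleCat.ofHom K.subtype) with hSf
  set Sg : (F M).obj Nι ⟶ (F M).obj (ModuleCat.of Λ ↥(LinearMap.range gl)) :=
    (F M).map (ModuleCat.ofHom gl.rangeRestrict) with hSg
  have hrrsub : gl.rangeRestrict.comp K.subtype = 0 :=
    LinearMap.ext fun y => Subtype.ext (LinearMap.mem_ker.mp y.2)
  have hzero : Sf ≫ Sg = 0 := by
    ext1
    rw [Rep.hom_comp, Rep.zero_hom]
    apply Representation.IntertwiningMap.ext
    show (LinearMap.rTensor _ gl.rangeRestrict).comp (LinearMap.rTensor _ K.subtype) = 0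
    rw [← LinearMap.rTensor_comp, hrrsub, LinearMap.rTensor_zero]
  set S₁ : ShortComplex (Rep Λ I) := ShortComplex.mk Sf Sg hzero with hS₁def
  have hexactK : Function.Exact (⇑K.subtype) (⇑gl.rangeRestrict) := by
    intro y
    constructor
    · intro hy
      have hy' : gl y = 0 := by
        have := congrArg (Subtype.val) hy
        exact this
      exact ⟨⟨y, hy'⟩, rfl⟩
    · rintro ⟨z, rfl⟩
      exact Subtype.ext (LinearMap.mem_ker.mp z.2)
  have hS₁ : S₁.ShortExact := by
    apply rep_shortExact
    · show Function.Injective (Sf.hom)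
      show Function.Injective (rTensor M.V K.subtype)
      exact Module.Flat.rTensor_preserves_injective_linearMap K.subtype K.injective_subtype
    · show Function.Surjective (Sg.hom)
      show Function.Surjective (rTensor M.V gl.rangeRestrict)
      exact LinearMap.rTensor_surjective _ gl.surjective_rangeRestrict
    · show LinearMap.range (rTensor M.V K.subtype) = LinearMap.ker (rTensor M.V gl.rangeRestrict)
      exact (LinearMap.exact_iff.mp
        (Module.Flat.rTensor_exact (M.V) hexactK)).symm
  have hTS₁ := hexact S₁ hS₁
  -- the element of `T (Λ^Fin l ⊗ M)` encoding the relation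
  set xt : ↥(T.obj ((F M).obj Nι)) :=
    ∑ i, T.map (j M Nι (Pi.single i 1)) (x i) with hxt
  -- it is killed by `T (gl ⊗ id)`
  have hgl_single : ∀ i : Fin l, gl (Pi.single i 1) = f i := by
    intro i
    rw [gl_apply]
    simp [Pi.single_apply, mul_ite, Finset.sum_ite_eq]
  have hxtkill : T.map ((F M).map (ModuleCat.ofHom gl)) xt = 0 := by
    have hterm : ∀ i : Fin l,
        T.map ((F M).map (ModuleCat.ofHom gl)) (T.map (j M Nι (Pi.single i 1)) (x i))
          = f i • T.map (j M (ModuleCat.of Λ Λ) (1 : Λ)) (x i) := by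
      intro i
      have hval : (ModuleCat.ofHom gl : Nι ⟶ ModuleCat.of Λ Λ) (Pi.single i 1) = f i • (1 : Λ) := by
        rw [smul_eq_mul, mul_one]
        exact hgl_single i
      have hcomp : j M Nι (Pi.single i 1) ≫ (F M).map (ModuleCat.ofHom gl)
          = f i • j M (ModuleCat.of Λ Λ) (1 : Λ) := by
        rw [j_naturality, hval, j_smul]
      calc T.map ((F M).map (ModuleCat.ofHom gl)) (T.map (j M Nι (Pi.single i 1)) (x i))
          = T.map (j M Nι (Pi.single i 1) ≫ (F M).map (ModuleCat.ofHom gl)) (x i) := by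
            rw [T.map_comp]; rfl
        _ = T.map (f i • j M (ModuleCat.of Λ Λ) (1 : Λ)) (x i) := by rw [hcomp]
        _ = f i • T.map (j M (ModuleCat.of Λ Λ) (1 : Λ)) (x i) := by
            rw [Functor.map_smul]; rfl
    rw [hxt, map_sum]
    calc ∑ i, T.map ((F M).map (ModuleCat.ofHom gl)) (T.map (j M Nι (Pi.single i 1)) (x i))
        = ∑ i, f i • T.map (j M (ModuleCat.of Λ Λ) (1 : Λ)) (x i) := by
          exact Finset.sum_congr rfl fun i _ => hterm i
      _ = T.map (j M (ModuleCat.of Λ Λ) (1 : Λ)) (∑ i, f i • x i) := by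
          rw [map_sum]
          exact Finset.sum_congr rfl fun i _ => (map_smul _ _ _).symm
      _ = 0 := by rw [hfx, map_zero]
  -- `xt` is killed by `T.map S₁.g`
  have hxtg : T.map S₁.g xt = 0 := by
    have hglfact : (ModuleCat.ofHom gl : Nι ⟶ ModuleCat.of Λ Λ)
        = ModuleCat.ofHom gl.rangeRestrict ≫ ModuleCat.ofHom (LinearMap.range gl).subtype :=
      rfl
    have h0 := hxtkill
    rw [hglfact, Functor.map_comp, Functor.map_comp] at h0
    haveI := F_map_mono M hMflat (ModuleCat.ofHom (LinearMap.range gl).subtype)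
      (Submodule.injective_subtype (LinearMap.range gl))
    have hmono : Mono (T.map ((F M).map (ModuleCat.ofHom (LinearMap.range gl).subtype))) :=
      T_mono T hexact _
    have hinj : Function.Injective
        (T.map ((F M).map (ModuleCat.ofHom (LinearMap.range gl).subtype))) :=
      (ModuleCat.mono_iff_injective _).mp hmono
    apply hinj
    rw [map_zero]
    exact h0
  -- exactness: find `s` in `T (K ⊗ M)` mapping to `xt`
  have hex2 : LinearMap.range (T.map S₁.f).hom
      = LinearMap.ker (T.map S₁.g).hom :=
    hTS₁.exact.moduleCat_range_eq_ker
  obtain ⟨s, hs⟩ : xt ∈ LinearMap.range (T.map S₁.f).hom := by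
    rw [hex2]
    exact LinearMap.mem_ker.mpr hxtg
  -- descend along the filtered colimit to a f.g. submodule `P₀ ≤ K`
  haveI : Limits.PreservesFilteredColimitsOfSize.{0, 0} T :=
    Limits.preservesFilteredColimitsOfSize_shrink T
  haveI : Limits.PreservesColimitsOfShape (Ω WK) T :=
    Limits.PreservesFilteredColimitsOfSize.preserves_filtered_colimits _
  have hTc : Limits.IsColimit (T.mapCocone (cc M WK)) :=
    Limits.isColimitOfPreserves T (ccIsColimit M WK)
  obtain ⟨P₀, s₀, hs₀⟩ := Limits.Concrete.isColimit_exists_rep _ hTc s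
  -- cover `P₀` by a finite free module
  haveI : Module.Finite Λ ↥P₀.1 := Module.Finite.iff_fg.mpr P₀.2
  obtain ⟨n, π, hπ⟩ := Module.Finite.exists_fin' Λ ↥P₀.1
  haveI := F_map_epi M (ModuleCat.ofHom π) hπ
  have hsurj : Function.Surjective
      (T.map ((F M).map (ModuleCat.ofHom π))).hom :=
    (ModuleCat.epi_iff_surjective _).mp (T_epi T hexact _)
  obtain ⟨y', hy'⟩ := hsurj s₀
  -- the matrix and the new generators
  set Φ : (Fin n → Λ) →ₗ[Λ] (Fin l → Λ) := K.subtype ∘ₗ P₀.1.subtype ∘ₗ π with hΦ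
  refine ⟨n, fun i jj => Φ (Pi.single jj 1) i,
    fun jj => T.map ((F M).map (ModuleCat.ofHom (LinearMap.proj jj)) ≫ v M) y', ?_, ?_⟩
  · -- x i = ∑ jj, a i jj • y jj
    intro i
    show x i = ∑ jj, Φ (Pi.single jj 1) i •
      T.map ((F M).map (ModuleCat.ofHom (LinearMap.proj jj)) ≫ v M) y'
    have h1 : T.map ((F M).map (ModuleCat.ofHom (LinearMap.proj i)) ≫ v M) xt = x i := by
      rw [hxt, map_sum]
      have hterm : ∀ i' : Fin l,
          T.map ((F M).map (ModuleCat.ofHom (LinearMap.proj i)) ≫ v M)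
              (T.map (j M Nι (Pi.single i' 1)) (x i'))
            = ((Pi.single i' (1 : Λ) : Fin l → Λ) i) • x i' := by
        intro i'
        have hval : (ModuleCat.ofHom (LinearMap.proj i) : Nι ⟶ ModuleCat.of Λ Λ)
            (Pi.single i' 1) = (Pi.single i' (1 : Λ) : Fin l → Λ) i := rfl
        have hcomp : j M Nι (Pi.single i' 1)
              ≫ ((F M).map (ModuleCat.ofHom (LinearMap.proj i)) ≫ v M)
            = ((Pi.single i' (1 : Λ) : Fin l → Λ) i) • 𝟙 M := by
          rw [← Category.assoc, j_naturality, hval, j_comp_v]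
        calc T.map ((F M).map (ModuleCat.ofHom (LinearMap.proj i)) ≫ v M)
              (T.map (j M Nι (Pi.single i' 1)) (x i'))
            = T.map (j M Nι (Pi.single i' 1)
                ≫ ((F M).map (ModuleCat.ofHom (LinearMap.proj i)) ≫ v M)) (x i') := by
              rw [T.map_comp (j M Nι (Pi.single i' 1))
                ((F M).map (ModuleCat.ofHom (LinearMap.proj i)) ≫ v M)]
              rfl
          _ = T.map (((Pi.single i' (1 : Λ) : Fin l → Λ) i) • 𝟙 M) (x i') := by rw [hcomp]
          _ = ((Pi.single i' (1 : Λ) : Fin l → Λ) i) • x i' := by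
              rw [Functor.map_smul, T.map_id]; rfl
      calc (∑ i', T.map ((F M).map (ModuleCat.ofHom (LinearMap.proj i)) ≫ v M)
              (T.map (j M Nι (Pi.single i' 1)) (x i')))
          = ∑ i', ((Pi.single i' (1 : Λ) : Fin l → Λ) i) • x i' :=
            Finset.sum_congr rfl fun i' _ => hterm i'
        _ = x i := by
            simp [Pi.single_apply, ite_smul]
    have hfactor : (F M).map (ModuleCat.ofHom π) ≫ (cc M WK).ι.app P₀ ≫ S₁.f
        = (F M).map (ModuleCat.ofHom Φ) := by
      show (F M).map (ModuleCat.ofHom π) ≫ (F M).map (ModuleCat.ofHom P₀.1.subtype)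
          ≫ (F M).map (ModuleCat.ofHom K.subtype) = (F M).map (ModuleCat.ofHom Φ)
      rw [← Functor.map_comp, ← Functor.map_comp]
      exact congrArg (F M).map (ModuleCat.hom_ext (LinearMap.ext fun w => rfl))
    have h2 : xt = T.map ((F M).map (ModuleCat.ofHom Φ)) y' := by
      have e2 : s = T.map ((cc M WK).ι.app P₀) s₀ := by rw [← hs₀]; rfl
      rw [← hs, e2, ← hy', ← hfactor]
      simp only [Functor.map_comp]
      exact (ConcreteCategory.congr_hom (T.map_comp ((cc M WK).ι.app P₀) S₁.f) _).symm
    have h3 : (LinearMap.proj i).comp Φ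
        = ∑ jj, Φ (Pi.single jj 1) i • LinearMap.proj (R := Λ) (φ := fun _ : Fin n => Λ) jj := by
      apply Module.Basis.ext (Pi.basisFun Λ (Fin n))
      intro jj
      simp only [Pi.basisFun_apply, LinearMap.comp_apply, LinearMap.sum_apply,
        LinearMap.smul_apply, LinearMap.proj_apply]
      simp [Pi.single_apply, smul_eq_mul]
    have h4 : (F M).map (ModuleCat.ofHom Φ)
          ≫ ((F M).map (ModuleCat.ofHom (LinearMap.proj i)) ≫ v M)
        = ∑ jj, Φ (Pi.single jj 1) i
            • ((F M).map (ModuleCat.ofHom (LinearMap.proj jj)) ≫ v M) := by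
      rw [← Category.assoc, ← Functor.map_comp]
      have hcomp : ModuleCat.ofHom Φ ≫ (ModuleCat.ofHom (LinearMap.proj i) : Nι ⟶ ModuleCat.of Λ Λ)
          = ModuleCat.ofHom ((LinearMap.proj i).comp Φ) := rfl
      rw [hcomp, h3]
      have hsum : (ModuleCat.ofHom (∑ jj, Φ (Pi.single jj 1) i
              • LinearMap.proj (R := Λ) (φ := fun _ : Fin n => Λ) jj)
            : ModuleCat.of Λ (Fin n → Λ) ⟶ ModuleCat.of Λ Λ)
          = ∑ jj, Φ (Pi.single jj 1) i
              • (ModuleCat.ofHom (LinearMap.proj (R := Λ) (φ := fun _ : Fin n => Λ) jj)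
                : ModuleCat.of Λ (Fin n → Λ) ⟶ ModuleCat.of Λ Λ) := by
          ext : 1; simp
      rw [hsum, Functor.map_sum, Preadditive.sum_comp]
      refine Finset.sum_congr rfl fun jj _ => ?_
      rw [F_map_smul, Linear.smul_comp]
    calc x i
        = T.map ((F M).map (ModuleCat.ofHom (LinearMap.proj i)) ≫ v M) xt := h1.symm
      _ = T.map ((F M).map (ModuleCat.ofHom (LinearMap.proj i)) ≫ v M)
            (T.map ((F M).map (ModuleCat.ofHom Φ)) y') := by rw [← h2]
      _ = T.map ((F M).map (ModuleCat.ofHom Φ)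
            ≫ ((F M).map (ModuleCat.ofHom (LinearMap.proj i)) ≫ v M)) y' := by
          rw [T.map_comp ((F M).map (ModuleCat.ofHom Φ))
            ((F M).map (ModuleCat.ofHom (LinearMap.proj i)) ≫ v M)]
          rfl
      _ = T.map (∑ jj, Φ (Pi.single jj 1) i
            • ((F M).map (ModuleCat.ofHom (LinearMap.proj jj)) ≫ v M)) y' := by rw [h4]
      _ = ∑ jj, Φ (Pi.single jj 1) i
            • T.map ((F M).map (ModuleCat.ofHom (LinearMap.proj jj)) ≫ v M) y' := by
          rw [Functor.map_sum]
          show (∑ jj, T.map (Φ (Pi.single jj 1) i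
            • ((F M).map (ModuleCat.ofHom (LinearMap.proj jj)) ≫ v M))).hom y' = _
          rw [ModuleCat.hom_sum, LinearMap.sum_apply]
          refine Finset.sum_congr rfl fun jj _ => ?_
          rw [Functor.map_smul]
          rfl
  · -- relations
    intro jj
    have hmem : Φ (Pi.single jj 1) ∈ K := (P₀.1.subtype (π (Pi.single jj 1))).2
    have h0 : gl (Φ (Pi.single jj 1)) = 0 := LinearMap.mem_ker.mp hmem
    rw [gl_apply] at h0
    exact h0
end
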